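/- Let A be an n×n complex matrix (n ≥ 2) whose eigenvalues all have modulus at most 1 and whose spectral norm satisfies ‖A‖₂ ≤ M. Then for every k ≥ 1, ‖A^k‖₂ ≤ (e·k)^(n-1) · max{M^(n-1), 1} ≤ (e·k)^(n-1) · max{M^n, 1}. -/

import Mathlib

open Matrix

/-- The spectral norm (ℓ² operator norm) of a complex matrix. -/
noncomputable def specNorm {m n : Type*} [Fintype m] [Fintype n] [DecidableEq n]
    (A : Matrix m n ℂ) : ℝ :=
  ‖LinearMap.toContinuousLinearMap (Matrix.toEuclideanLin A)‖

open Polynomial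
open scoped Matrix.Norms.L2Operator

noncomputable def bcoef (l : List ℂ) : ℕ → ℕ → ℂ
  | 0, 0 => 1
  | 0, _+1 => 0
  | k+1, 0 => l.getD 0 0 * bcoef l k 0
  | k+1, i+1 => bcoef l k i + l.getD (i+1) 0 * bcoef l k (i+1)

lemma bcoef_norm (l : List ℂ) (hl : ∀ i, ‖l.getD i 0‖ ≤ 1) :
    ∀ k i, ‖bcoef l k i‖ ≤ (k.choose i : ℝ) := by
  intro k
  induction k with
  | zero => intro i; match i with
    | 0 => simp [bcoef]
    | i+1 => simp [bcoef]
  | succ k ih =>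
    intro i
    match i with
    | 0 =>
      have h1 := hl 0
      have h2 := ih 0
      calc ‖bcoef l (k+1) 0‖ = ‖l.getD 0 0‖ * ‖bcoef l k 0‖ := by rw [bcoef, norm_mul]
        _ ≤ 1 * (k.choose 0 : ℝ) := by
            apply mul_le_mul h1 h2 (norm_nonneg _) zero_le_one
        _ = ((k+1).choose 0 : ℝ) := by simp
    | i+1 =>
      calc ‖bcoef l (k+1) (i+1)‖ ≤ ‖bcoef l k i‖ + ‖l.getD (i+1) 0‖ * ‖bcoef l k (i+1)‖ := by
            rw [bcoef]; exact (norm_add_le _ _).trans (by rw [norm_mul])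
        _ ≤ (k.choose i : ℝ) + 1 * (k.choose (i+1) : ℝ) := by
            gcongr
            · exact ih i
            · exact hl _
            · exact ih _
        _ = ((k+1).choose (i+1) : ℝ) := by rw [Nat.choose_succ_succ]; push_cast; ring

variable {n : ℕ}

noncomputable def Emat (A : Matrix (Fin n) (Fin n) ℂ) (l : List ℂ) (i : ℕ) :
    Matrix (Fin n) (Fin n) ℂ :=
  ((l.take i).map (fun z => A - z • 1)).prod

lemma Emat_zero (A : Matrix (Fin n) (Fin n) ℂ) (l : List ℂ) : Emat A l 0 = 1 := by
  simp [Emat]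

lemma Emat_succ (A : Matrix (Fin n) (Fin n) ℂ) (l : List ℂ) (i : ℕ) (hi : i < l.length) :
    Emat A l (i+1) = Emat A l i * (A - l.getD i 0 • 1) := by
  unfold Emat
  rw [List.take_succ, List.map_append, List.prod_append]
  congr 1
  rw [List.getD_eq_getElem _ _ hi, List.getElem?_eq_getElem hi]
  simp

lemma Emat_of_le (A : Matrix (Fin n) (Fin n) ℂ) (l : List ℂ) (i : ℕ) (hi : l.length ≤ i) :
    Emat A l i = (l.map (fun z => A - z • 1)).prod := by
  unfold Emat
  rw [List.take_of_length_le hi]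

lemma Emat_mul (A : Matrix (Fin n) (Fin n) ℂ) (l : List ℂ)
    (hCH : (l.map (fun z => A - z • (1:Matrix (Fin n) (Fin n) ℂ))).prod = 0) (i : ℕ) :
    Emat A l i * A = Emat A l (i+1) + l.getD i 0 • Emat A l i := by
  rcases lt_or_ge i l.length with hi | hi
  · rw [Emat_succ A l i hi, mul_sub, mul_smul_comm, mul_one, sub_add_cancel]
  · have h0 : Emat A l i = 0 := by rw [Emat_of_le A l i hi, hCH]
    have h1 : Emat A l (i+1) = 0 := by
      rw [Emat_of_le A l _ (le_trans hi (Nat.le_succ i)), hCH]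
    simp [h0, h1]

lemma matrix_nontrivial (hn : 0 < n) : Nontrivial (Matrix (Fin n) (Fin n) ℂ) := by
  refine ⟨1, 0, fun h => ?_⟩
  have := congr_fun (congr_fun h ⟨0, hn⟩) ⟨0, hn⟩
  simp at this

lemma Emat_norm (hn : 0 < n) (A : Matrix (Fin n) (Fin n) ℂ) (l : List ℂ) (M : ℝ)
    (hA : ‖A‖ ≤ M) (hl : ∀ i, ‖l.getD i 0‖ ≤ 1) :
    ∀ i, i ≤ l.length → ‖Emat A l i‖ ≤ (M+1)^i := by
  haveI := matrix_nontrivial hn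
  have hM0 : 0 ≤ M := le_trans (norm_nonneg A) hA
  intro i
  induction i with
  | zero => intro _; rw [Emat_zero]; simp [CStarRing.norm_one]
  | succ i ih =>
    intro hi
    have hi' : i < l.length := by omega
    rw [Emat_succ A l i hi']
    calc ‖Emat A l i * (A - l.getD i 0 • 1)‖ ≤ ‖Emat A l i‖ * ‖A - l.getD i 0 • 1‖ :=
          norm_mul_le _ _
      _ ≤ (M+1)^i * (M+1) := by
          apply mul_le_mul (ih (by omega)) ?_ (norm_nonneg _) (by positivity)
          calc ‖A - l.getD i 0 • 1‖ ≤ ‖A‖ + ‖l.getD i 0 • (1:Matrix (Fin n) (Fin n) ℂ)‖ :=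
                norm_sub_le _ _
            _ ≤ M + 1 := by
                apply add_le_add hA
                rw [norm_smul, CStarRing.norm_one, mul_one]
                exact hl i
      _ = (M+1)^(i+1) := by rw [pow_succ]

lemma pow_eq_sum (A : Matrix (Fin n) (Fin n) ℂ) (l : List ℂ) (hlen : l.length = n)
    (hCH : (l.map (fun z => A - z • (1:Matrix (Fin n) (Fin n) ℂ))).prod = 0) :
    ∀ k, A ^ k = ∑ i ∈ Finset.range (n+1), bcoef l k i • Emat A l i := by
  have hE1 : Emat A l (n+1) = 0 := by
    rw [Emat_of_le A l _ (by omega), hCH]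
  intro k
  induction k with
  | zero =>
    rw [pow_zero, Finset.sum_eq_single 0]
    · simp [bcoef, Emat_zero]
    · intro b _ hb
      match b with
      | 0 => exact absurd rfl hb
      | b+1 => simp [bcoef]
    · simp
  | succ k ih =>
    rw [pow_succ, ih, Finset.sum_mul]
    have h1 : ∀ i ∈ Finset.range (n+1), (bcoef l k i • Emat A l i) * A
        = bcoef l k i • Emat A l (i+1) + (l.getD i 0 * bcoef l k i) • Emat A l i := by
      intro i _
      rw [smul_mul_assoc, Emat_mul A l hCH i, smul_add, mul_smul, smul_comm]
    rw [Finset.sum_congr rfl h1, Finset.sum_add_distrib]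
    rw [Finset.sum_range_succ (fun i => bcoef l k i • Emat A l (i+1)), hE1, smul_zero, add_zero]
    rw [Finset.sum_range_succ' (fun i => (l.getD i 0 * bcoef l k i) • Emat A l i)]
    conv_rhs => rw [Finset.sum_range_succ' (fun i => bcoef l (k+1) i • Emat A l i)]
    show _ = (∑ i ∈ Finset.range n,
        (bcoef l k i + l.getD (i+1) 0 * bcoef l k (i+1)) • Emat A l (i+1))
      + (l.getD 0 0 * bcoef l k 0) • Emat A l 0
    simp only [add_smul, Finset.sum_add_distrib]
    abel

lemma key (hn : 2 ≤ n) (A : Matrix (Fin n) (Fin n) ℂ) (M : ℝ)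
    (hspec : ∀ μ ∈ spectrum ℂ A, ‖μ‖ ≤ 1) (hA : ‖A‖ ≤ M) (k : ℕ) :
    ‖A ^ k‖ ≤ ∑ i ∈ Finset.range n, (k.choose i : ℝ) * (M + 1) ^ i := by
  -- roots list
  have hsplits : (Matrix.charpoly A).Splits := IsAlgClosed.splits _
  have hcard : (Matrix.charpoly A).roots.card = n := by
    rw [(Polynomial.splits_iff_card_roots).mp hsplits, Matrix.charpoly_natDegree_eq_dim,
      Fintype.card_fin]
  set l : List ℂ := (Matrix.charpoly A).roots.toList with hldef
  have hlen : l.length = n := by simp [hldef, hcard]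
  have hroot : ∀ z ∈ l, ‖z‖ ≤ 1 := by
    intro z hz
    apply hspec
    have hr : (Matrix.charpoly A).IsRoot z :=
      Polynomial.isRoot_of_mem_roots (by rwa [← Multiset.mem_toList])
    rw [spectrum.mem_iff]
    intro hU
    rw [Matrix.isUnit_iff_isUnit_det] at hU
    have hdet : (algebraMap ℂ (Matrix (Fin n) (Fin n) ℂ) z - A).det
        = (Matrix.charpoly A).eval z := by
      rw [Matrix.charpoly, eval_det, matPolyEquiv_charmatrix]
      simp [Matrix.scalar, algebraMap]
    rw [hdet, hr] at hU
    exact hU.ne_zero rfl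
  have hgetD : ∀ i, ‖l.getD i 0‖ ≤ 1 := by
    intro i
    rcases lt_or_ge i l.length with hi | hi
    · rw [List.getD_eq_getElem _ _ hi]
      exact hroot _ (List.getElem_mem hi)
    · rw [List.getD_eq_default _ _ hi]; simp
  have hCH : (l.map (fun z => A - z • (1 : Matrix (Fin n) (Fin n) ℂ))).prod = 0 := by
    have hprod : Matrix.charpoly A = (l.map (fun z => X - C z)).prod := by
      conv_lhs => rw [hsplits.eq_prod_roots_of_monic
        (Matrix.charpoly_monic A)]
      rw [← Multiset.coe_toList (Matrix.charpoly A).roots, Multiset.map_coe, Multiset.prod_coe]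
    have hch := Matrix.aeval_self_charpoly A
    rw [hprod, map_list_prod (Polynomial.aeval A), List.map_map] at hch
    rw [← hch]
    congr 1
    ext z
    simp [Function.comp, Algebra.algebraMap_eq_smul_one]
  -- expansion
  rw [pow_eq_sum A l hlen hCH k]
  rw [Finset.sum_range_succ, Emat_of_le A l n (by omega), hCH, smul_zero, add_zero]
  calc ‖∑ i ∈ Finset.range n, bcoef l k i • Emat A l i‖
      ≤ ∑ i ∈ Finset.range n, ‖bcoef l k i • Emat A l i‖ := norm_sum_le _ _
    _ ≤ ∑ i ∈ Finset.range n, (k.choose i : ℝ) * (M + 1) ^ i := by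
        apply Finset.sum_le_sum
        intro i hi
        rw [norm_smul]
        apply mul_le_mul (bcoef_norm l hgetD k i)
          (Emat_norm (by omega) A l M hA hgetD i (by rw [hlen]; exact le_of_lt (Finset.mem_range.mp hi)))
          (norm_nonneg _) (Nat.cast_nonneg _)

lemma geom_sum_le (t : ℕ → ℝ) (r : ℕ) (h0 : ∀ i, 0 ≤ t i)
    (hg : ∀ i < r, 2 * t i ≤ t (i+1)) :
    ∑ i ∈ Finset.range (r+1), t i ≤ 2 * t r := by
  induction r with
  | zero => simpa using (by linarith [h0 0] : t 0 ≤ 2 * t 0)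
  | succ r ih =>
    rw [Finset.sum_range_succ]
    have h1 := hg r (by omega)
    have h2 := ih (fun i hi => hg i (by omega))
    linarith

lemma sum_le_exp_pow (k : ℕ) (hn : 2 ≤ n) (hk : n ≤ k) :
    ∑ i ∈ Finset.range n, (2*(k:ℝ))^i / (Nat.factorial i) ≤ (Real.exp 1 * k)^(n-1) := by
  have hek := Real.exp_one_gt_d9
  have hk2 : (2:ℝ) ≤ (k:ℝ) := by exact_mod_cast le_trans hn hk
  rcases eq_or_lt_of_le hn with h2 | h3
  · -- n = 2
    subst h2
    rw [Finset.sum_range_succ, Finset.sum_range_succ, Finset.sum_range_zero]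
    simp only [pow_zero, Nat.factorial_zero, Nat.factorial_one, pow_one]
    norm_num
    nlinarith
  · -- n ≥ 3
    set r := n - 1 with hr
    have hrn : n = r + 1 := by omega
    have hr2 : 2 ≤ r := by omega
    have hfac : (2:ℝ) ≤ (Nat.factorial r : ℝ) := by
      exact_mod_cast le_trans hr2 (Nat.self_le_factorial r)
    have hsum : ∑ i ∈ Finset.range (r+1), (2*(k:ℝ))^i / (Nat.factorial i)
        ≤ 2 * ((2*(k:ℝ))^r / (Nat.factorial r)) := by
      apply geom_sum_le _ _ (fun i => by positivity)
      intro i hi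
      have hik : 2 * ((i:ℝ) + 1) ≤ 2 * (k:ℝ) := by
        have : i + 1 ≤ k := by omega
        have : ((i:ℝ)) + 1 ≤ (k:ℝ) := by exact_mod_cast this
        linarith
      have hfs : (Nat.factorial (i+1) : ℝ) = (Nat.factorial i) * ((i:ℝ)+1) := by
        rw [Nat.factorial_succ]; push_cast; ring
      have hfpos : (0:ℝ) < Nat.factorial i := by positivity
      have hx : (0:ℝ) ≤ (2*(k:ℝ))^i := by positivity
      rw [pow_succ, hfs]
      rw [show 2 * ((2*(k:ℝ))^i / (Nat.factorial i)) = 2*(2*(k:ℝ))^i / (Nat.factorial i) by ring]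
      rw [div_le_div_iff₀ hfpos (by positivity)]
      calc 2*(2*(k:ℝ))^i * ((Nat.factorial i) * ((i:ℝ)+1))
          = (2 * ((i:ℝ)+1)) * ((2*(k:ℝ))^i * (Nat.factorial i)) := by ring
        _ ≤ (2 * (k:ℝ)) * ((2*(k:ℝ))^i * (Nat.factorial i)) := by
            apply mul_le_mul_of_nonneg_right hik (by positivity)
        _ = (2*(k:ℝ))^i * (2*(k:ℝ)) * (Nat.factorial i) := by ring
    have key2 : 2 * ((2*(k:ℝ))^r / (Nat.factorial r)) ≤ (Real.exp 1 * (k:ℝ))^r := by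
      have h2e : (2:ℝ)^r ≤ (Real.exp 1)^r := by
        apply pow_le_pow_left₀ (by norm_num)
        linarith
      have hp : (0:ℝ) < (Nat.factorial r : ℝ) := by positivity
      calc 2 * ((2*(k:ℝ))^r / (Nat.factorial r))
          = (2*(k:ℝ))^r * (2 / (Nat.factorial r)) := by ring
        _ ≤ (2*(k:ℝ))^r * 1 := by
            apply mul_le_mul_of_nonneg_left _ (by positivity)
            rw [div_le_one hp]; exact hfac
        _ = (2:ℝ)^r * (k:ℝ)^r := by rw [mul_one, mul_pow]
        _ ≤ (Real.exp 1)^r * (k:ℝ)^r := by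
            apply mul_le_mul_of_nonneg_right h2e (by positivity)
        _ = (Real.exp 1 * (k:ℝ))^r := (mul_pow _ _ _).symm
    rw [hrn]
    simpa using le_trans hsum key2

lemma numeric (k : ℕ) (hn : 2 ≤ n) (hk : n ≤ k) (m : ℝ) (hm : 1 ≤ m) :
    ∑ i ∈ Finset.range n, (k.choose i : ℝ) * (2*m)^i
      ≤ (Real.exp 1 * k)^(n-1) * m^(n-1) := by
  have hm0 : (0:ℝ) ≤ m := by linarith
  calc ∑ i ∈ Finset.range n, (k.choose i : ℝ) * (2*m)^i
      ≤ ∑ i ∈ Finset.range n, ((2*(k:ℝ))^i / (Nat.factorial i)) * m^(n-1) := by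
        apply Finset.sum_le_sum
        intro i hi
        have h1 : (k.choose i : ℝ) ≤ (k:ℝ)^i / (Nat.factorial i) := by
          simpa using Nat.choose_le_pow_div (α := ℝ) i k
        have h3 : m^i ≤ m^(n-1) := by
          apply pow_le_pow_right₀ hm
          have := Finset.mem_range.mp hi
          omega
        calc (k.choose i : ℝ) * (2*m)^i
            = ((k.choose i : ℝ) * 2^i) * m^i := by rw [mul_pow]; ring
          _ ≤ (((k:ℝ)^i / (Nat.factorial i)) * 2^i) * m^(n-1) := by
              apply mul_le_mul _ h3 (pow_nonneg hm0 i) (by positivity)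
              apply mul_le_mul_of_nonneg_right h1 (by positivity)
          _ = ((2*(k:ℝ))^i / (Nat.factorial i)) * m^(n-1) := by
              rw [mul_pow]; ring
    _ = (∑ i ∈ Finset.range n, (2*(k:ℝ))^i / (Nat.factorial i)) * m^(n-1) := by
        rw [Finset.sum_mul]
    _ ≤ (Real.exp 1 * k)^(n-1) * m^(n-1) := by
        apply mul_le_mul_of_nonneg_right (sum_le_exp_pow k hn hk) (by positivity)

lemma specNorm_eq_norm {m : ℕ} (A : Matrix (Fin m) (Fin m) ℂ) : specNorm A = ‖A‖ := rfl

theorem matrix_power_bound {n : ℕ} (hn : 2 ≤ n) (A : Matrix (Fin n) (Fin n) ℂ) (M : ℝ)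
    (hspec : ∀ μ ∈ spectrum ℂ A, ‖μ‖ ≤ 1) (hA : specNorm A ≤ M) :
    ∀ k : ℕ, 1 ≤ k →
      specNorm (A ^ k) ≤ (Real.exp 1 * k) ^ (n - 1) * max (M ^ (n - 1)) 1 ∧
      (Real.exp 1 * k) ^ (n - 1) * max (M ^ (n - 1)) 1 ≤
        (Real.exp 1 * k) ^ (n - 1) * max (M ^ n) 1 := by
  intro k hk
  rw [specNorm_eq_norm] at hA
  have hM0 : 0 ≤ M := le_trans (norm_nonneg A) hA
  have hk1 : (1:ℝ) ≤ (k:ℝ) := by exact_mod_cast hk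
  have hek1 : (1:ℝ) ≤ Real.exp 1 * k := by nlinarith [Real.exp_one_gt_d9]
  set m := max M 1 with hmdef
  have hm1 : (1:ℝ) ≤ m := le_max_right _ _
  have hMm : M ≤ m := le_max_left _ _
  have hmax : max (M ^ (n-1)) 1 = m ^ (n-1) := by
    rcases le_total M 1 with h | h
    · rw [max_eq_right (pow_le_one₀ hM0 h), hmdef, max_eq_right h, one_pow]
    · rw [max_eq_left (one_le_pow₀ h), hmdef, max_eq_left h]
  constructor
  · rw [specNorm_eq_norm, hmax]
    rcases lt_or_ge k n with hkn | hkn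
    · calc ‖A ^ k‖ ≤ ‖A‖ ^ k := norm_pow_le' A hk
        _ ≤ M ^ k := pow_le_pow_left₀ (norm_nonneg A) hA k
        _ ≤ m ^ k := pow_le_pow_left₀ hM0 hMm k
        _ ≤ m ^ (n-1) := pow_le_pow_right₀ hm1 (by omega)
        _ ≤ (Real.exp 1 * k) ^ (n-1) * m ^ (n-1) := by
            apply le_mul_of_one_le_left (by positivity)
            exact one_le_pow₀ hek1
    · calc ‖A ^ k‖ ≤ ∑ i ∈ Finset.range n, (k.choose i : ℝ) * (M + 1) ^ i :=
            key hn A M hspec hA k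
        _ ≤ ∑ i ∈ Finset.range n, (k.choose i : ℝ) * (2*m) ^ i := by
            apply Finset.sum_le_sum
            intro i _
            apply mul_le_mul_of_nonneg_left _ (Nat.cast_nonneg _)
            apply pow_le_pow_left₀ (by linarith) (by linarith)
        _ ≤ (Real.exp 1 * k) ^ (n-1) * m ^ (n-1) := numeric k hn hkn m hm1
  · apply mul_le_mul_of_nonneg_left _ (by positivity)
    apply max_le _ (le_max_right _ _)
    rcases le_total M 1 with h | h
    · exact le_trans (pow_le_one₀ hM0 h) (le_max_right _ _)
    · exact le_trans (pow_le_pow_right₀ h (by omega)) (le_max_left _ _)
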